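/- arXiv:1104.0023 — 3 statements merged into one kernel-verified Lean document; each statement's English description precedes it below -/
import Mathlib

section
/- For any symmetric trace-free bilinear form T on an n-dimensional real inner product space (n ≥ 2), the cubic trace satisfies tr(T³) ≥ -((n-2)/√(n(n-1))) · |T|³, where |T| is the Frobenius norm. -/
open Matrix Finset

/-- Scalar version: for reals summing to zero, `∑ μᵢ³ ≥ -((n-2)/√(n(n-1))) (∑ μᵢ²)^{3/2}`. -/
lemma scalar_cubic_bound (n : ℕ) (hn : 2 ≤ n) (μ : Fin n → ℝ)
    (h1 : ∑ i, μ i = 0) :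
    -((n - 2 : ℝ) / Real.sqrt (n * (n - 1))) * Real.sqrt (∑ i, μ i ^ 2) ^ 3 ≤
      ∑ i, μ i ^ 3 := by
  have hn1 : (1 : ℝ) ≤ (n : ℝ) := by exact_mod_cast Nat.one_le_of_lt hn
  have hn2 : (2 : ℝ) ≤ (n : ℝ) := by exact_mod_cast hn
  have hnn : (0 : ℝ) < (n : ℝ) * ((n : ℝ) - 1) := by nlinarith
  set c : ℝ := Real.sqrt ((n : ℝ) * ((n : ℝ) - 1)) with hc
  have hcpos : 0 < c := Real.sqrt_pos.mpr hnn
  have hc2 : c ^ 2 = (n : ℝ) * ((n : ℝ) - 1) := Real.sq_sqrt hnn.le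
  have hs2nn : (0 : ℝ) ≤ ∑ i, μ i ^ 2 := Finset.sum_nonneg fun i _ => sq_nonneg _
  set s : ℝ := Real.sqrt (∑ i, μ i ^ 2) with hs
  have hsnn : 0 ≤ s := Real.sqrt_nonneg _
  have hs2 : s ^ 2 = ∑ i, μ i ^ 2 := Real.sq_sqrt hs2nn
  set a : ℝ := s / c with ha
  have hann : 0 ≤ a := div_nonneg hsnn hcpos.le
  have hac : a * c = s := div_mul_cancel₀ s hcpos.ne'
  -- each value is bounded below by `-(n-1) a`
  have hbound : ∀ i, -(((n : ℝ) - 1) * a) ≤ μ i := by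
    intro i
    have hsplit : ∑ j ∈ univ.erase i, μ j = -μ i := by
      have h := Finset.add_sum_erase univ μ (Finset.mem_univ i)
      rw [h1] at h; linarith
    have hsq : (∑ j ∈ univ.erase i, μ j) ^ 2 ≤
        (#(univ.erase i) : ℝ) * ∑ j ∈ univ.erase i, μ j ^ 2 :=
      sq_sum_le_card_mul_sum_sq (s := univ.erase i) (f := μ)
    have hcard : (#((univ : Finset (Fin n)).erase i) : ℝ) = (n : ℝ) - 1 := by
      rw [Finset.card_erase_of_mem (Finset.mem_univ i)]
      simp only [Finset.card_univ, Fintype.card_fin]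
      push_cast [Nat.cast_sub (Nat.one_le_of_lt hn)]
      ring
    have hsum_erase : ∑ j ∈ univ.erase i, μ j ^ 2 = s ^ 2 - μ i ^ 2 := by
      rw [hs2]
      have h := Finset.add_sum_erase univ (fun j => μ j ^ 2) (Finset.mem_univ i)
      linarith [h]
    rw [hsplit, hcard, hsum_erase, neg_pow] at hsq
    have hnpos : (0 : ℝ) < (n : ℝ) := by linarith
    have hkey : μ i ^ 2 ≤ (((n : ℝ) - 1) * a) ^ 2 := by
      have h2 : (((n : ℝ) - 1) * a) ^ 2 * (n : ℝ) = ((n : ℝ) - 1) * s ^ 2 := by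
        rw [ha, mul_pow, div_pow, hc2]
        field_simp
      have hmul : μ i ^ 2 * (n : ℝ) ≤ (((n : ℝ) - 1) * a) ^ 2 * (n : ℝ) := by
        nlinarith [hsq]
      exact le_of_mul_le_mul_right hmul hnpos
    exact (abs_le_of_sq_le_sq' hkey (mul_nonneg (by linarith) hann)).1
  -- key algebraic identity via the cubic factorization
  have hid : ∑ i, μ i ^ 3 =
      (∑ i, (μ i - a) ^ 2 * (μ i + ((n : ℝ) - 1) * a))
        - ((n : ℝ) - 3) * a * (∑ i, μ i ^ 2)
        + (2 * (n : ℝ) - 3) * a ^ 2 * (∑ i, μ i)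
        - (n : ℝ) * (((n : ℝ) - 1) * a ^ 3) := by
    have hrw : ∀ i ∈ (univ : Finset (Fin n)), μ i ^ 3 =
        (μ i - a) ^ 2 * (μ i + ((n : ℝ) - 1) * a)
          - ((n : ℝ) - 3) * a * μ i ^ 2
          + (2 * (n : ℝ) - 3) * a ^ 2 * μ i
          - ((n : ℝ) - 1) * a ^ 3 := by
      intro i _; ring
    rw [Finset.sum_congr rfl hrw]
    simp only [Finset.sum_add_distrib, Finset.sum_sub_distrib, ← Finset.mul_sum,
      Finset.sum_const, Finset.card_univ, Fintype.card_fin, nsmul_eq_mul]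
    ring
  have hpos : 0 ≤ ∑ i, (μ i - a) ^ 2 * (μ i + ((n : ℝ) - 1) * a) := by
    apply Finset.sum_nonneg
    intro i _
    have := hbound i
    have : 0 ≤ μ i + ((n : ℝ) - 1) * a := by linarith
    positivity
  rw [hid, h1, hs2.symm]
  have h3 : s = a * c := hac.symm
  have e1 : -((n - 2 : ℝ) / c) * (a * c) ^ 3 = -((n : ℝ) - 2) * a ^ 3 * c ^ 2 := by
    field_simp
  have hfinal : -((n - 2 : ℝ) / c) * s ^ 3 =
      -(((n : ℝ) - 3) * a * s ^ 2) + (2 * (n : ℝ) - 3) * a ^ 2 * 0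
        - (n : ℝ) * (((n : ℝ) - 1) * a ^ 3) := by
    rw [h3, e1]
    linear_combination (-a ^ 3) * hc2
  linarith [hpos, hfinal.le, hfinal.ge]

/-- Huisken's estimate: for any symmetric trace-free bilinear form (matrix) `T` on an
`n`-dimensional real inner product space (`n ≥ 2`), the cubic trace satisfies
`tr(T³) ≥ -((n-2)/√(n(n-1))) · |T|³`, where `|T| = √(tr(T²))` is the Frobenius norm. -/
theorem cubic_trace_lower_bound (n : ℕ) (hn : 2 ≤ n)
    (T : Matrix (Fin n) (Fin n) ℝ) (hsymm : T.IsSymm) (htr : T.trace = 0) :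
    -((n - 2 : ℝ) / Real.sqrt (n * (n - 1))) * Real.sqrt ((T * T).trace) ^ 3 ≤
      (T * T * T).trace := by
  have hherm : T.IsHermitian := by
    rwa [Matrix.IsHermitian, Matrix.conjTranspose_eq_transpose_of_trivial]
  set μ := hherm.eigenvalues with hμ
  set U : Matrix (Fin n) (Fin n) ℝ := (hherm.eigenvectorUnitary : Matrix (Fin n) (Fin n) ℝ)
    with hU
  have hUU : star U * U = 1 :=
    Matrix.mem_unitaryGroup_iff'.mp (hherm.eigenvectorUnitary).2
  have hUU' : U * star U = 1 :=
    Matrix.mem_unitaryGroup_iff.mp (hherm.eigenvectorUnitary).2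
  have hspec : T = U * Matrix.diagonal μ * star U := by
    have h := hherm.spectral_theorem
    simpa using h
  have hconj : ∀ A B : Matrix (Fin n) (Fin n) ℝ,
      (U * A * star U) * (U * B * star U) = U * (A * B) * star U := by
    intro A B
    simp only [Matrix.mul_assoc]
    rw [← Matrix.mul_assoc (star U) U (B * star U), hUU, Matrix.one_mul]
  have htrace : ∀ A : Matrix (Fin n) (Fin n) ℝ, (U * A * star U).trace = A.trace := by
    intro A
    rw [Matrix.trace_mul_cycle, hUU, Matrix.one_mul]
  have htr1 : T.trace = ∑ i, μ i := by
    rw [hspec, htrace, Matrix.trace_diagonal]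
  have htr2 : (T * T).trace = ∑ i, μ i ^ 2 := by
    rw [hspec, hconj, htrace, Matrix.diagonal_mul_diagonal, Matrix.trace_diagonal]
    exact Finset.sum_congr rfl fun i _ => by ring
  have htr3 : (T * T * T).trace = ∑ i, μ i ^ 3 := by
    rw [hspec, hconj, hconj, htrace, Matrix.diagonal_mul_diagonal,
      Matrix.diagonal_mul_diagonal, Matrix.trace_diagonal]
    exact Finset.sum_congr rfl fun i _ => by ring
  rw [htr2, htr3]
  exact scalar_cubic_bound n hn μ (by rw [← htr1]; exact htr)
end

section
/- For a 4-tensor W with the symmetries of the Weyl tensor (Riemann-type symmetries and all traces zero) and a symmetric trace-free 2-tensor T on an n-dimensional inner product space (n ≥ 3), the contraction satisfies |W_ijkl T^ik T^jl| ≤ √((n-2)/(2(n-1))) · |W| · |T|². -/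
open Finset

namespace WeylAux
noncomputable section

variable {n : ℕ} (T : Matrix (Fin n) (Fin n) ℝ)

/-- Kronecker delta. -/
def dl (i j : Fin n) : ℝ := if i = j then 1 else 0

/-- Gram matrix `D = T Tᵀ`. -/
def Dm (i j : Fin n) : ℝ := ∑ m, T i m * T j m

/-- Squared Frobenius norm of `T`. -/
def sg : ℝ := ∑ i, ∑ j, T i j ^ 2

/-- The optimal trace correction matrix (a Schouten-type tensor of `T ⊗ T`). -/
def Bm (i j : Fin n) : ℝ :=
  (-(Dm T i j) + sg T / (2 * ((n : ℝ) - 1)) * dl i j) / ((n : ℝ) - 2)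

def Mt (i j k l : Fin n) : ℝ := T i k * T j l - dl i k * Bm T j l - Bm T i k * dl j l

/-- The trace-free part of the curvature-type tensor built from `T ⊗ T`. -/
def Ct (i j k l : Fin n) : ℝ := Mt T i j k l - Mt T i j l k

def QQ : ℝ := ∑ i, ∑ j, (Dm T i j) ^ 2
def b2 : ℝ := ∑ i, ∑ j, (Bm T i j) ^ 2
def trB : ℝ := ∑ i, Bm T i i
def tDB : ℝ := ∑ i, ∑ j, Dm T i j * Bm T i j
def tTB : ℝ := ∑ i, ∑ j, T i j * Bm T i j
def trT : ℝ := ∑ i, T i i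

lemma sum_dl_mul (f : Fin n → ℝ) (i : Fin n) : ∑ k, dl i k * f k = f i := by simp [dl]
lemma sum_f_mul_dl (f : Fin n → ℝ) (j : Fin n) : ∑ k, f k * dl j k = f j := by simp [dl]
lemma dl_comm (i j : Fin n) : dl i j = dl j i := by unfold dl; simp [eq_comm]
lemma sum_dl_sq : ∑ i, ∑ j, (dl (n := n) i j)^2 = (n : ℝ) := by simp [dl]
lemma sum_mul_dl (f : Fin n → Fin n → ℝ) : ∑ i, ∑ j, f i j * dl i j = ∑ i, f i i := by
  simp [dl]
lemma sum_dl_diag : ∑ i, dl (n := n) i i = (n : ℝ) := by simp [dl]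

lemma dsum_factor (f g : Fin n → ℝ) : ∑ k, ∑ l, f k * g l = (∑ k, f k) * (∑ l, g l) := by
  rw [Finset.sum_mul]
  exact Finset.sum_congr rfl fun k _ => (Finset.mul_sum _ _ _).symm

lemma Dm_symm (i j : Fin n) : Dm T i j = Dm T j i := by
  unfold Dm; exact Finset.sum_congr rfl fun m _ => mul_comm _ _

lemma trD_eq : ∑ i, Dm T i i = sg T := by
  unfold Dm sg
  exact Finset.sum_congr rfl fun i _ => Finset.sum_congr rfl fun m _ => (pow_two (T i m)).symm

/-! ### The Frobenius norm of `Mt` -/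

lemma inner_sq (p q r : ℝ) :
    ∑ j, ∑ l, (p * T j l + q * Bm T j l + r * dl j l)^2
      = p^2 * sg T + q^2 * b2 T + r^2 * n + 2*p*q * tTB T + 2*p*r * trT T + 2*q*r * trB T := by
  have h : ∀ j l : Fin n, (p * T j l + q * Bm T j l + r * dl j l)^2
      = p^2 * (T j l)^2 + q^2 * (Bm T j l)^2 + r^2 * (dl j l)^2
        + 2*p*q * (T j l * Bm T j l) + 2*p*r * (T j l * dl j l) + 2*q*r * (Bm T j l * dl j l) :=
    fun j l => by ring
  simp_rw [h, Finset.sum_add_distrib, ← Finset.mul_sum]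
  rw [sum_dl_sq, sum_mul_dl T, sum_mul_dl (Bm T)]
  rfl

lemma sum_M_sq :
    ∑ i, ∑ j, ∑ k, ∑ l, (Mt T i j k l)^2
      = (sg T)^2 + 2*n*(b2 T) + 2*(trB T)^2 - 4*(trT T)*(tTB T) := by
  have swap : ∑ i, ∑ j, ∑ k, ∑ l, (Mt T i j k l)^2
      = ∑ i, ∑ k, ∑ j, ∑ l, (Mt T i j k l)^2 :=
    Finset.sum_congr rfl fun i _ => Finset.sum_comm
  rw [swap]
  have h1 : ∀ i k : Fin n, ∑ j, ∑ l, (Mt T i j k l)^2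
      = (T i k)^2 * sg T + (dl i k)^2 * b2 T + (Bm T i k)^2 * n
        + 2*(T i k)*(-(dl i k)) * tTB T + 2*(T i k)*(-(Bm T i k)) * trT T
        + 2*(-(dl i k))*(-(Bm T i k)) * trB T := by
    intro i k
    have e : ∀ j l : Fin n, (Mt T i j k l)^2
        = ((T i k) * T j l + (-(dl i k)) * Bm T j l + (-(Bm T i k)) * dl j l)^2 := by
      intro j l; unfold Mt; ring
    rw [show ∑ j, ∑ l, (Mt T i j k l)^2
        = ∑ j, ∑ l, ((T i k) * T j l + (-(dl i k)) * Bm T j l + (-(Bm T i k)) * dl j l)^2 from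
      Finset.sum_congr rfl fun j _ => Finset.sum_congr rfl fun l _ => e j l]
    rw [inner_sq]
    ring
  rw [Finset.sum_congr rfl fun i _ => Finset.sum_congr rfl fun k _ => h1 i k]
  have expand : ∀ i k : Fin n, (T i k)^2 * sg T + (dl i k)^2 * b2 T + (Bm T i k)^2 * n
        + 2*(T i k)*(-(dl i k)) * tTB T + 2*(T i k)*(-(Bm T i k)) * trT T
        + 2*(-(dl i k))*(-(Bm T i k)) * trB T
      = sg T * (T i k)^2 + b2 T * (dl i k)^2 + (n:ℝ) * (Bm T i k)^2
        + (-(2 * tTB T)) * (T i k * dl i k) + (-(2 * trT T)) * (T i k * Bm T i k)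
        + (2 * trB T) * (Bm T i k * dl i k) := fun i k => by ring
  simp_rw [expand, Finset.sum_add_distrib, ← Finset.mul_sum]
  rw [sum_dl_sq, sum_mul_dl T, sum_mul_dl (Bm T)]
  show sg T * sg T + b2 T * n + n * b2 T + -(2 * tTB T) * trT T + -(2 * trT T) * tTB T
      + 2 * trB T * trB T = _
  ring

/-! ### The cross term `∑ Mt_{ijkl} Mt_{ijlk}` -/

lemma hinner (i j : Fin n) :
    ∑ k, ∑ l, Mt T i j k l * Mt T i j l k
      = (∑ m, T i m * T j m) * (∑ m, T j m * T i m)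
        - (∑ m, T i m * Bm T j m) * T j i
        - T i j * (∑ m, T j m * Bm T i m)
        - T j i * (∑ m, T i m * Bm T j m)
        + Bm T j i * Bm T j i
        + dl i j * (∑ m, Bm T j m * Bm T i m)
        + Bm T i j * Bm T i j
        - (∑ m, T j m * Bm T i m) * T i j
        + (∑ m, Bm T i m * Bm T j m) * dl i j := by
  have e : ∀ k l : Fin n, Mt T i j k l * Mt T i j l k
      = (T i k * T j k) * (T j l * T i l)
        - (T i k * Bm T j k) * (T j l * dl i l)
        - (T i k * dl j k) * (T j l * Bm T i l)
        - (dl i k * T j k) * (T i l * Bm T j l)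
        + (dl i k * Bm T j k) * (Bm T j l * dl i l)
        + (dl i k * dl j k) * (Bm T j l * Bm T i l)
        - (T j k * Bm T i k) * (dl j l * T i l)
        + (Bm T i k * Bm T j k) * (dl j l * dl i l)
        + (Bm T i k * dl j k) * (Bm T i l * dl j l) := by
    intro k l; unfold Mt; ring
  have L1 : ∀ k : Fin n, ∑ l, Mt T i j k l * Mt T i j l k
      = (T i k * T j k) * (∑ m, T j m * T i m)
        - (T i k * Bm T j k) * T j i
        - (T i k * dl j k) * (∑ m, T j m * Bm T i m)
        - (dl i k * T j k) * (∑ m, T i m * Bm T j m)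
        + (dl i k * Bm T j k) * Bm T j i
        + (dl i k * dl j k) * (∑ m, Bm T j m * Bm T i m)
        - (T j k * Bm T i k) * T i j
        + (Bm T i k * Bm T j k) * dl i j
        + (Bm T i k * dl j k) * Bm T i j := by
    intro k
    simp_rw [e]
    simp only [Finset.sum_add_distrib, Finset.sum_sub_distrib, ← Finset.mul_sum]
    rw [sum_f_mul_dl (fun l => T j l) i, sum_f_mul_dl (fun l => Bm T j l) i,
      sum_dl_mul (fun l => T i l) j, sum_dl_mul (fun l => dl i l) j,
      sum_f_mul_dl (fun l => Bm T i l) j]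
  simp_rw [L1]
  simp only [Finset.sum_add_distrib, Finset.sum_sub_distrib, ← Finset.sum_mul]
  rw [sum_f_mul_dl (fun k => T i k) j, sum_dl_mul (fun k => T j k) i,
    sum_dl_mul (fun k => Bm T j k) i, sum_dl_mul (fun k => dl j k) i,
    sum_f_mul_dl (fun k => Bm T i k) j, dl_comm j i]
  ring

lemma OA : ∑ i, ∑ j, (∑ m, T i m * T j m) * (∑ m, T j m * T i m) = QQ T := by
  unfold QQ
  refine Finset.sum_congr rfl fun i _ => Finset.sum_congr rfl fun j _ => ?_
  have : (∑ m, T j m * T i m) = ∑ m, T i m * T j m :=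
    Finset.sum_congr rfl fun m _ => mul_comm _ _
  rw [this]
  show (Dm T i j) * (Dm T i j) = _
  ring

lemma OB (hT : ∀ a b, T a b = T b a) :
    ∑ i, ∑ j, (∑ m, T i m * Bm T j m) * T j i = tDB T := by
  have e1 : ∀ i j : Fin n, (∑ m, T i m * Bm T j m) * T j i
      = ∑ m, Bm T j m * (T m i * T j i) := by
    intro i j; rw [Finset.sum_mul]
    exact Finset.sum_congr rfl fun m _ => by rw [hT i m]; ring
  simp_rw [e1]
  rw [Finset.sum_comm]
  have e2 : ∀ j : Fin n, ∑ i, ∑ m, Bm T j m * (T m i * T j i) = ∑ m, Dm T j m * Bm T j m := by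
    intro j
    rw [Finset.sum_comm]
    refine Finset.sum_congr rfl fun m _ => ?_
    rw [← Finset.mul_sum]
    show Bm T j m * Dm T m j = _
    rw [Dm_symm T m j]; ring
  simp_rw [e2]
  rfl

lemma OC (hT : ∀ a b, T a b = T b a) :
    ∑ i, ∑ j, T i j * (∑ m, T j m * Bm T i m) = tDB T := by
  rw [Finset.sum_comm]
  rw [← OB T hT]
  exact Finset.sum_congr rfl fun i _ => Finset.sum_congr rfl fun j _ => by ring

lemma OG (hT : ∀ a b, T a b = T b a) :
    ∑ i, ∑ j, (∑ m, T j m * Bm T i m) * T i j = tDB T := by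
  rw [← OC T hT]
  exact Finset.sum_congr rfl fun i _ => Finset.sum_congr rfl fun j _ => by ring

lemma OD (hT : ∀ a b, T a b = T b a) :
    ∑ i, ∑ j, T j i * (∑ m, T i m * Bm T j m) = tDB T := by
  rw [Finset.sum_comm]
  exact OC T hT

lemma OE : ∑ i, ∑ j, Bm T j i * Bm T j i = b2 T := by
  rw [Finset.sum_comm]
  unfold b2
  exact Finset.sum_congr rfl fun i _ => Finset.sum_congr rfl fun j _ => (pow_two _).symm

lemma OI : ∑ i, ∑ j, Bm T i j * Bm T i j = b2 T := by
  unfold b2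
  exact Finset.sum_congr rfl fun i _ => Finset.sum_congr rfl fun j _ => (pow_two _).symm

lemma OF : ∑ i, ∑ j, dl i j * (∑ m, Bm T j m * Bm T i m) = b2 T := by
  have h : ∀ i : Fin n, ∑ j, dl i j * (∑ m, Bm T j m * Bm T i m) = ∑ m, Bm T i m * Bm T i m :=
    fun i => sum_dl_mul (fun j => ∑ m, Bm T j m * Bm T i m) i
  simp_rw [h]
  unfold b2
  exact Finset.sum_congr rfl fun i _ => Finset.sum_congr rfl fun m _ => (pow_two _).symm

lemma OH : ∑ i, ∑ j, (∑ m, Bm T i m * Bm T j m) * dl i j = b2 T := by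
  have h : ∀ i : Fin n, ∑ j, (∑ m, Bm T i m * Bm T j m) * dl i j = ∑ m, Bm T i m * Bm T i m :=
    fun i => sum_f_mul_dl (fun j => ∑ m, Bm T i m * Bm T j m) i
  simp_rw [h]
  unfold b2
  exact Finset.sum_congr rfl fun i _ => Finset.sum_congr rfl fun m _ => (pow_two _).symm

lemma sum_M_M' (hT : ∀ a b, T a b = T b a) :
    ∑ i, ∑ j, ∑ k, ∑ l, Mt T i j k l * Mt T i j l k = QQ T - 4 * tDB T + 4 * b2 T := by
  simp_rw [hinner]
  simp only [Finset.sum_add_distrib, Finset.sum_sub_distrib]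
  rw [OA, OB T hT, OC T hT, OD T hT, OG T hT, OE, OF, OH, OI]
  ring

lemma sum_C_sq (hT : ∀ a b, T a b = T b a) :
    ∑ i, ∑ j, ∑ k, ∑ l, (Ct T i j k l)^2
      = 2 * ((sg T)^2 + 2*n*(b2 T) + 2*(trB T)^2 - 4*(trT T)*(tTB T))
        - 2 * (QQ T - 4 * tDB T + 4 * b2 T) := by
  have h : ∀ i j : Fin n, ∑ k, ∑ l, (Ct T i j k l)^2
      = 2 * (∑ k, ∑ l, (Mt T i j k l)^2) - 2 * (∑ k, ∑ l, Mt T i j k l * Mt T i j l k) := by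
    intro i j
    have e : ∀ k l : Fin n, (Ct T i j k l)^2
        = (Mt T i j k l)^2 - 2*(Mt T i j k l * Mt T i j l k) + (Mt T i j l k)^2 :=
      fun k l => by unfold Ct; ring
    simp_rw [e, Finset.sum_add_distrib, Finset.sum_sub_distrib, ← Finset.mul_sum]
    have sw : ∑ k, ∑ l, (Mt T i j l k)^2 = ∑ k, ∑ l, (Mt T i j k l)^2 := Finset.sum_comm
    rw [sw]; ring
  simp_rw [h]
  simp only [Finset.sum_sub_distrib, ← Finset.mul_sum]
  rw [sum_M_sq, sum_M_M' T hT]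

/-! ### Closed forms for the scalar invariants of `Bm` -/

lemma htrB : trB T = (-(sg T) + sg T / (2 * ((n:ℝ) - 1)) * n) / ((n:ℝ) - 2) := by
  unfold trB Bm
  rw [← Finset.sum_div]
  congr 1
  rw [Finset.sum_add_distrib, Finset.sum_neg_distrib, trD_eq, ← Finset.mul_sum, sum_dl_diag]

lemma htDB : tDB T = (-(QQ T) + sg T / (2 * ((n:ℝ) - 1)) * sg T) / ((n:ℝ) - 2) := by
  unfold tDB Bm
  have e : ∀ i j : Fin n, Dm T i j * ((-(Dm T i j) + sg T / (2 * ((n:ℝ) - 1)) * dl i j) / ((n:ℝ) - 2))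
      = (-(Dm T i j)^2 + sg T / (2 * ((n:ℝ) - 1)) * (Dm T i j * dl i j)) / ((n:ℝ) - 2) :=
    fun i j => by ring
  simp_rw [e, ← Finset.sum_div]
  congr 1
  simp_rw [Finset.sum_add_distrib, Finset.sum_neg_distrib, ← Finset.mul_sum]
  rw [show ∑ i, ∑ j, Dm T i j * dl i j = ∑ i, Dm T i i from sum_mul_dl (Dm T), trD_eq]
  rfl

lemma hb2 : b2 T = (QQ T - 2 * (sg T / (2 * ((n:ℝ) - 1))) * sg T
    + (sg T / (2 * ((n:ℝ) - 1)))^2 * n) / ((n:ℝ) - 2)^2 := by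
  unfold b2 Bm
  have e : ∀ i j : Fin n, ((-(Dm T i j) + sg T / (2 * ((n:ℝ) - 1)) * dl i j) / ((n:ℝ) - 2))^2
      = ((Dm T i j)^2 - 2 * (sg T / (2 * ((n:ℝ) - 1))) * (Dm T i j * dl i j)
          + (sg T / (2 * ((n:ℝ) - 1)))^2 * (dl i j)^2) / ((n:ℝ) - 2)^2 :=
    fun i j => by rw [div_pow]; ring_nf
  simp_rw [e, ← Finset.sum_div]
  congr 1
  simp_rw [Finset.sum_add_distrib, Finset.sum_sub_distrib, ← Finset.mul_sum]
  rw [sum_dl_sq, show ∑ i, ∑ j, Dm T i j * dl i j = ∑ i, Dm T i i from sum_mul_dl (Dm T), trD_eq]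
  rfl

/-! ### The key algebraic inequality -/

lemma alg (e m nr s q : ℝ) (he : 0 < e) (hm : m = e + 1) (hnr : nr = e + 2)
    (hq : s^2 ≤ nr * q) :
    2 * (s^2 + 2*nr*((q - 2*(s/(2*m))*s + (s/(2*m))^2*nr)/e^2)
        + 2*((-s + s/(2*m)*nr)/e)^2 - 4*0*((-q + s/(2*m)*s)/e))
      - 2 * (q - 4*((-q + s/(2*m)*s)/e) + 4*((q - 2*(s/(2*m))*s + (s/(2*m))^2*nr)/e^2))
    ≤ 2*e/m*s^2 := by
  subst hm hnr
  rw [← sub_nonneg]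
  have h1 : e ≠ 0 := ne_of_gt he
  have h2 : e + 1 ≠ 0 := by nlinarith
  have key : 2*e/(e+1)*s^2
      - (2 * (s^2 + 2*(e+2)*((q - 2*(s/(2*(e+1)))*s + (s/(2*(e+1)))^2*(e+2))/e^2)
          + 2*((-s + s/(2*(e+1))*(e+2))/e)^2 - 4*0*((-q + s/(2*(e+1))*s)/e))
        - 2 * (q - 4*((-q + s/(2*(e+1))*s)/e) + 4*((q - 2*(s/(2*(e+1)))*s + (s/(2*(e+1)))^2*(e+2))/e^2)))
      = 2*((e+2)*q - s^2)/e := by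
    field_simp
    ring
  rw [key]
  exact div_nonneg (by linarith) he.le

lemma sg_sq_le : (sg T)^2 ≤ (n:ℝ) * QQ T := by
  have h1 : (sg T)^2 ≤ (n:ℝ) * ∑ i, (Dm T i i)^2 := by
    have := Finset.sum_mul_sq_le_sq_mul_sq Finset.univ (fun _ : Fin n => (1:ℝ))
      (fun i => Dm T i i)
    simpa [trD_eq] using this
  refine h1.trans ?_
  have h2 : ∑ i, (Dm T i i)^2 ≤ QQ T := by
    unfold QQ
    refine Finset.sum_le_sum fun i _ => ?_
    exact Finset.single_le_sum (fun j _ => sq_nonneg (Dm T i j)) (Finset.mem_univ i)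
  have hn0 : (0:ℝ) ≤ (n:ℝ) := Nat.cast_nonneg n
  nlinarith [h2]

lemma C_sq_le (hn : 3 ≤ n) (hT : ∀ a b, T a b = T b a) (htrT0 : trT T = 0) :
    ∑ i, ∑ j, ∑ k, ∑ l, (Ct T i j k l)^2
      ≤ 2 * ((n:ℝ) - 2) / ((n:ℝ) - 1) * (sg T)^2 := by
  have hn3 : (3:ℝ) ≤ (n:ℝ) := by exact_mod_cast hn
  have he : (0:ℝ) < (n:ℝ) - 2 := by linarith
  rw [sum_C_sq T hT, htrT0, hb2, htrB, htDB]
  have h := alg ((n:ℝ) - 2) ((n:ℝ) - 1) (n:ℝ) (sg T) (QQ T) he (by ring) (by ring)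
    (sg_sq_le T)
  convert h using 2 <;> ring

/-! ### Contraction of `W` against `Ct` -/

lemma contract (W : Fin n → Fin n → Fin n → Fin n → ℝ)
    (hW2 : ∀ i j k l, W i j k l = -W i j l k)
    (tr1 : ∀ j l, ∑ i, W i j i l = 0)
    (tr2 : ∀ i k, ∑ j, W i j k j = 0)
    (tr3 : ∀ j k, ∑ i, W i j k i = 0)
    (tr4 : ∀ i l, ∑ j, W i j j l = 0) :
    ∑ i, ∑ j, ∑ k, ∑ l, W i j k l * Ct T i j k l
      = 2 * ∑ i, ∑ j, ∑ k, ∑ l, W i j k l * T i k * T j l := by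
  have e : ∀ i j k l : Fin n, W i j k l * Ct T i j k l
      = W i j k l * T i k * T j l - W i j k l * (T i l * T j k)
        - dl i k * (W i j k l * Bm T j l) - dl j l * (W i j k l * Bm T i k)
        + dl i l * (W i j k l * Bm T j k) + dl j k * (W i j k l * Bm T i l) :=
    fun i j k l => by unfold Ct Mt; ring
  simp_rw [e]
  simp only [Finset.sum_add_distrib, Finset.sum_sub_distrib]
  have P2 : ∑ i, ∑ j, ∑ k, ∑ l, W i j k l * (T i l * T j k)
      = -∑ i, ∑ j, ∑ k, ∑ l, W i j k l * T i k * T j l := by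
    have h1 : ∀ i j : Fin n, ∑ k, ∑ l, W i j k l * (T i l * T j k)
        = ∑ k, ∑ l, -(W i j k l * T i k * T j l) := by
      intro i j
      rw [Finset.sum_comm]
      exact Finset.sum_congr rfl fun k _ => Finset.sum_congr rfl fun l _ => by
        rw [hW2 i j l k]; ring
    simp_rw [h1, Finset.sum_neg_distrib]
  have P3 : ∑ i, ∑ j, ∑ k, ∑ l, dl i k * (W i j k l * Bm T j l) = 0 := by
    have h1 : ∀ i j : Fin n, ∑ k, ∑ l, dl i k * (W i j k l * Bm T j l)
        = ∑ l, W i j i l * Bm T j l := by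
      intro i j
      simp_rw [← Finset.mul_sum]
      exact sum_dl_mul (fun k => ∑ l, W i j k l * Bm T j l) i
    simp_rw [h1]
    rw [Finset.sum_comm]
    have h2 : ∀ j : Fin n, ∑ i, ∑ l, W i j i l * Bm T j l = 0 := by
      intro j
      rw [Finset.sum_comm]
      simp_rw [← Finset.sum_mul, tr1, zero_mul, Finset.sum_const_zero]
    simp_rw [h2, Finset.sum_const_zero]
  have P4 : ∑ i, ∑ j, ∑ k, ∑ l, dl j l * (W i j k l * Bm T i k) = 0 := by
    have h1 : ∀ i j k : Fin n, ∑ l, dl j l * (W i j k l * Bm T i k)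
        = W i j k j * Bm T i k :=
      fun i j k => sum_dl_mul (fun l => W i j k l * Bm T i k) j
    simp_rw [h1]
    have h2 : ∀ i : Fin n, ∑ j, ∑ k, W i j k j * Bm T i k = 0 := by
      intro i
      rw [Finset.sum_comm]
      simp_rw [← Finset.sum_mul, tr2, zero_mul, Finset.sum_const_zero]
    simp_rw [h2, Finset.sum_const_zero]
  have P5 : ∑ i, ∑ j, ∑ k, ∑ l, dl i l * (W i j k l * Bm T j k) = 0 := by
    have h1 : ∀ i j k : Fin n, ∑ l, dl i l * (W i j k l * Bm T j k)
        = W i j k i * Bm T j k :=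
      fun i j k => sum_dl_mul (fun l => W i j k l * Bm T j k) i
    simp_rw [h1]
    rw [Finset.sum_comm]
    have h2 : ∀ j : Fin n, ∑ i, ∑ k, W i j k i * Bm T j k = 0 := by
      intro j
      rw [Finset.sum_comm]
      simp_rw [← Finset.sum_mul, tr3, zero_mul, Finset.sum_const_zero]
    simp_rw [h2, Finset.sum_const_zero]
  have P6 : ∑ i, ∑ j, ∑ k, ∑ l, dl j k * (W i j k l * Bm T i l) = 0 := by
    have h1 : ∀ i j : Fin n, ∑ k, ∑ l, dl j k * (W i j k l * Bm T i l)
        = ∑ l, W i j j l * Bm T i l := by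
      intro i j
      simp_rw [← Finset.mul_sum]
      exact sum_dl_mul (fun k => ∑ l, W i j k l * Bm T i l) j
    simp_rw [h1]
    have h2 : ∀ i : Fin n, ∑ j, ∑ l, W i j j l * Bm T i l = 0 := by
      intro i
      rw [Finset.sum_comm]
      simp_rw [← Finset.sum_mul, tr4, zero_mul, Finset.sum_const_zero]
    simp_rw [h2, Finset.sum_const_zero]
  rw [P2, P3, P4, P5, P6]
  ring

end
end WeylAux

set_option maxHeartbeats 1000000 in
open WeylAux in
/-- Huisken's estimate on the Weyl contraction: for a 4-tensor `W` with the symmetries of the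
Weyl tensor (Riemann-type symmetries, first Bianchi identity, and all traces zero) and a
symmetric trace-free 2-tensor `T` on an `n`-dimensional inner product space (`n ≥ 3`),
`|W_ijkl T^ik T^jl| ≤ √((n-2)/(2(n-1))) · |W| · |T|²` (Frobenius norms). -/
theorem weyl_contraction_estimate (n : ℕ) (hn : 3 ≤ n)
    (W : Fin n → Fin n → Fin n → Fin n → ℝ)
    (hW1 : ∀ i j k l, W i j k l = -W j i k l)
    (hW2 : ∀ i j k l, W i j k l = -W i j l k)
    (hW3 : ∀ i j k l, W i j k l = W k l i j)
    (hBianchi : ∀ i j k l, W i j k l + W i k l j + W i l j k = 0)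
    (htraceW : ∀ j l, ∑ i, W i j i l = 0)
    (T : Matrix (Fin n) (Fin n) ℝ) (hT : T.IsSymm) (htrT : T.trace = 0) :
    |∑ i, ∑ j, ∑ k, ∑ l, W i j k l * T i k * T j l| ≤
      Real.sqrt ((n - 2 : ℝ) / (2 * (n - 1))) *
        Real.sqrt (∑ i, ∑ j, ∑ k, ∑ l, (W i j k l) ^ 2) *
        (∑ i, ∑ j, (T i j) ^ 2) := by
  have hTs : ∀ a b, T a b = T b a := fun a b => hT.apply b a
  have htrT0 : trT T = 0 := by
    unfold trT
    simpa [Matrix.trace, Matrix.diag] using htrT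
  -- derived trace identities
  have tr2 : ∀ i k, ∑ j, W i j k j = 0 := by
    intro i k
    have h : ∀ j, W i j k j = W j k j i := fun j => by
      rw [hW3 i j k j, hW1 k j i j, hW2 j k i j, neg_neg]
    simp_rw [h]
    exact htraceW k i
  have tr3 : ∀ j k, ∑ i, W i j k i = 0 := by
    intro j k
    have h : ∀ i, W i j k i = -W i j i k := fun i => hW2 i j k i
    simp_rw [h, Finset.sum_neg_distrib, htraceW j k, neg_zero]
  have tr4 : ∀ i l, ∑ j, W i j j l = 0 := by
    intro i l
    have h : ∀ j, W i j j l = -W j i j l := fun j => hW1 i j j l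
    simp_rw [h, Finset.sum_neg_distrib, htraceW i l, neg_zero]
  set S := ∑ i, ∑ j, ∑ k, ∑ l, W i j k l * T i k * T j l with hS
  have h2S : ∑ i, ∑ j, ∑ k, ∑ l, W i j k l * Ct T i j k l = 2 * S :=
    contract T W hW2 htraceW tr2 tr3 tr4
  -- Cauchy–Schwarz
  have hCS : (∑ i, ∑ j, ∑ k, ∑ l, W i j k l * Ct T i j k l)^2
      ≤ (∑ i, ∑ j, ∑ k, ∑ l, (W i j k l)^2) * ∑ i, ∑ j, ∑ k, ∑ l, (Ct T i j k l)^2 := by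
    have := Finset.sum_mul_sq_le_sq_mul_sq Finset.univ
      (fun p : Fin n × Fin n × Fin n × Fin n => W p.1 p.2.1 p.2.2.1 p.2.2.2)
      (fun p : Fin n × Fin n × Fin n × Fin n => Ct T p.1 p.2.1 p.2.2.1 p.2.2.2)
    simpa [Fintype.sum_prod_type] using this
  set s := ∑ i, ∑ j, (T i j)^2 with hsdef
  have hs_sg : sg T = s := rfl
  have hW2nn : (0:ℝ) ≤ ∑ i, ∑ j, ∑ k, ∑ l, (W i j k l)^2 :=
    Finset.sum_nonneg fun i _ => Finset.sum_nonneg fun j _ => Finset.sum_nonneg fun k _ =>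
      Finset.sum_nonneg fun l _ => sq_nonneg _
  have hsnn : (0:ℝ) ≤ s :=
    Finset.sum_nonneg fun i _ => Finset.sum_nonneg fun j _ => sq_nonneg _
  have hC2 : ∑ i, ∑ j, ∑ k, ∑ l, (Ct T i j k l)^2
      ≤ 2 * ((n:ℝ) - 2) / ((n:ℝ) - 1) * s^2 := by
    rw [← hs_sg]; exact C_sq_le T hn hTs htrT0
  have hn3 : (3:ℝ) ≤ (n:ℝ) := by exact_mod_cast hn
  have hm : (0:ℝ) < (n:ℝ) - 1 := by linarith
  set K := ((n:ℝ) - 2) / (2 * ((n:ℝ) - 1)) with hK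
  have hKnn : 0 ≤ K := by
    apply div_nonneg <;> linarith
  have hSsq : S^2 ≤ K * (∑ i, ∑ j, ∑ k, ∑ l, (W i j k l)^2) * s^2 := by
    have h1 : (2*S)^2 ≤ (∑ i, ∑ j, ∑ k, ∑ l, (W i j k l)^2)
        * (2 * ((n:ℝ) - 2) / ((n:ℝ) - 1) * s^2) := by
      rw [← h2S]
      exact hCS.trans (mul_le_mul_of_nonneg_left hC2 hW2nn)
    have h2 : 2 * ((n:ℝ) - 2) / ((n:ℝ) - 1) = 4 * K := by
      rw [hK]; field_simp; ring
    rw [h2] at h1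
    nlinarith [h1]
  have habs : |S| = Real.sqrt (S^2) := (Real.sqrt_sq_eq_abs S).symm
  rw [habs]
  have h3 : Real.sqrt (S^2) ≤ Real.sqrt (K * (∑ i, ∑ j, ∑ k, ∑ l, (W i j k l)^2) * s^2) :=
    Real.sqrt_le_sqrt hSsq
  refine h3.trans_eq ?_
  have hKW : (0:ℝ) ≤ K * (∑ i, ∑ j, ∑ k, ∑ l, (W i j k l)^2) := mul_nonneg hKnn hW2nn
  rw [Real.sqrt_mul hKW, Real.sqrt_mul hKnn, Real.sqrt_sq hsnn]
end

section
/- Let f be a smooth function on a complete Riemannian manifold with (1/4)(r(q) - c₁)² ≤ f(q) ≤ (1/4)(r(q) + c₁)² for all q (r = distance to a fixed point p) and Vol(B_ρ(p)) ≤ c₂ρⁿ for large ρ, and suppose R ≥ 0 satisfies R ≤ f + C for a constant C. Then ∫_M R² e^{-f} dV < ∞. -/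
open MeasureTheory

/-- Cao–Zhou type integrability: on a complete `n`-dimensional Riemannian manifold
(abstracted as a metric measure space, with `μ` the Riemannian volume `dV`), if a smooth
function `f` satisfies `(1/4)(r(q) - c₁)² ≤ f(q) ≤ (1/4)(r(q) + c₁)²` with `r = dist(·, p)`,
the volume of balls satisfies `Vol(B_ρ(p)) ≤ c₂ ρⁿ` for all large `ρ`, and `R ≥ 0` satisfies
`R ≤ f + C`, then `∫_M R² e^{-f} dV < ∞`. -/
theorem scalar_sq_weighted_integrable {M : Type*} [MetricSpace M] [MeasurableSpace M]
    [OpensMeasurableSpace M] (μ : Measure M)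
    (n : ℕ) (p : M) (f R : M → ℝ) (c₁ c₂ C : ℝ)
    (hc₁ : 0 < c₁) (hc₂ : 0 < c₂) (hC : 0 < C)
    (hfmeas : Measurable f) (hRmeas : Measurable R)
    (hf : ∀ q, (dist q p - c₁) ^ 2 / 4 ≤ f q ∧ f q ≤ (dist q p + c₁) ^ 2 / 4)
    (hvol : ∃ ρ₀ : ℝ, ∀ ρ : ℝ, ρ₀ ≤ ρ → μ (Metric.ball p ρ) ≤ ENNReal.ofReal (c₂ * ρ ^ n))
    (hR : ∀ q, 0 ≤ R q ∧ R q ≤ f q + C) :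
    Integrable (fun q => R q ^ 2 * Real.exp (-f q)) μ := by
  obtain ⟨ρ₀, hρ₀⟩ := hvol
  set a : ℝ := c₁ / 4 + n + 1 with ha
  set K : ℝ := (32 + 2 * C ^ 2) * Real.exp (2 * a ^ 2) with hKdef
  have hK0 : 0 < K := by positivity
  -- pointwise bound
  have hbound : ∀ q, R q ^ 2 * Real.exp (-f q) ≤ K * Real.exp (-((n : ℝ) + 1) * dist q p) := by
    intro q
    obtain ⟨hf1, hf2⟩ := hf q
    obtain ⟨hR1, hR2⟩ := hR q
    have hd0 : (0 : ℝ) ≤ dist q p := dist_nonneg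
    have hf0 : 0 ≤ f q := le_trans (by positivity) hf1
    have h1 : R q ^ 2 ≤ 2 * f q ^ 2 + 2 * C ^ 2 := by nlinarith [sq_nonneg (f q - C)]
    -- f² ≤ 16 e^{f/2}
    have e1 : f q / 4 + 1 ≤ Real.exp (f q / 4) := Real.add_one_le_exp _
    have e4 : Real.exp (f q / 4) * Real.exp (f q / 4) = Real.exp (f q / 2) := by
      rw [← Real.exp_add]; ring_nf
    have e2 : f q ^ 2 / 16 ≤ Real.exp (f q / 2) := by nlinarith
    have e3 : Real.exp (f q / 2) * Real.exp (-f q) = Real.exp (-(f q) / 2) := by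
      rw [← Real.exp_add]; ring_nf
    have h2 : f q ^ 2 * Real.exp (-f q) ≤ 16 * Real.exp (-(f q) / 2) := by
      nlinarith [Real.exp_pos (-f q)]
    have h3 : Real.exp (-f q) ≤ Real.exp (-(f q) / 2) := by
      apply Real.exp_le_exp.mpr; linarith
    have h4 : R q ^ 2 * Real.exp (-f q) ≤ (32 + 2 * C ^ 2) * Real.exp (-(f q) / 2) := by
      have hexp0 : 0 < Real.exp (-f q) := Real.exp_pos _
      nlinarith [sq_nonneg C]
    have h5 : Real.exp (-(f q) / 2) ≤ Real.exp (-(dist q p - c₁) ^ 2 / 8) := by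
      apply Real.exp_le_exp.mpr; linarith
    have h6 : Real.exp (-(dist q p - c₁) ^ 2 / 8) ≤
        Real.exp (2 * a ^ 2) * Real.exp (-((n : ℝ) + 1) * dist q p) := by
      rw [← Real.exp_add]
      apply Real.exp_le_exp.mpr
      rw [ha]
      have expand : 2 * (c₁ / 4 + (n : ℝ) + 1) ^ 2 + -(((n : ℝ) + 1) * dist q p)
          + (dist q p - c₁) ^ 2 / 8
          = (dist q p - 4 * (c₁ / 4 + (n : ℝ) + 1)) ^ 2 / 8 + c₁ ^ 2 / 8 := by ring
      linarith [sq_nonneg (dist q p - 4 * (c₁ / 4 + (n : ℝ) + 1)), sq_nonneg c₁]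
    calc R q ^ 2 * Real.exp (-f q) ≤ (32 + 2 * C ^ 2) * Real.exp (-(f q) / 2) := h4
      _ ≤ (32 + 2 * C ^ 2) * Real.exp (-(dist q p - c₁) ^ 2 / 8) := by
          apply mul_le_mul_of_nonneg_left h5 (by positivity)
      _ ≤ (32 + 2 * C ^ 2) * (Real.exp (2 * a ^ 2) * Real.exp (-((n : ℝ) + 1) * dist q p)) := by
          apply mul_le_mul_of_nonneg_left h6 (by positivity)
      _ = K * Real.exp (-((n : ℝ) + 1) * dist q p) := by rw [hKdef]; ring
  -- constants for volume bound
  set m : ℝ := max ρ₀ 1 with hm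
  have hm1 : (1 : ℝ) ≤ m := le_max_right _ _
  set c₃ : ℝ := c₂ * m ^ n with hc₃
  have hc₃0 : 0 < c₃ := by positivity
  have hball : ∀ k : ℕ, μ (Metric.ball p ((k : ℝ) + 1)) ≤ ENNReal.ofReal (c₃ * ((k : ℝ) + 1) ^ n) := by
    intro k
    have hk1 : (1 : ℝ) ≤ (k : ℝ) + 1 := by
      have : (0:ℝ) ≤ (k:ℝ) := Nat.cast_nonneg k
      linarith
    have hsub : Metric.ball p ((k : ℝ) + 1) ⊆ Metric.ball p (((k : ℝ) + 1) * m) :=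
      Metric.ball_subset_ball (le_mul_of_one_le_right (by positivity) hm1)
    calc μ (Metric.ball p ((k : ℝ) + 1)) ≤ μ (Metric.ball p (((k : ℝ) + 1) * m)) :=
          measure_mono hsub
      _ ≤ ENNReal.ofReal (c₂ * (((k : ℝ) + 1) * m) ^ n) := by
          apply hρ₀
          calc ρ₀ ≤ m := le_max_left _ _
            _ ≤ ((k : ℝ) + 1) * m := le_mul_of_one_le_left (by linarith) hk1
      _ = ENNReal.ofReal (c₃ * ((k : ℝ) + 1) ^ n) := by
          congr 1; rw [hc₃, mul_pow]; ring
  -- the majorant is integrable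
  have hmaj : Integrable (fun q => K * Real.exp (-((n : ℝ) + 1) * dist q p)) μ := by
    have hcont : Continuous fun q : M => K * Real.exp (-((n : ℝ) + 1) * dist q p) :=
      continuous_const.mul ((continuous_const.mul (continuous_id.dist continuous_const)).rexp)
    refine ⟨hcont.aestronglyMeasurable, ?_⟩
    rw [hasFiniteIntegral_iff_ofReal (Filter.Eventually.of_forall fun q => by positivity)]
    set A : ℕ → Set M := fun k => Metric.ball p ((k : ℝ) + 1) \ Metric.ball p (k : ℝ) with hA
    have hAm : ∀ k, MeasurableSet (A k) := fun k =>
      measurableSet_ball.diff measurableSet_ball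
    have hAd : Pairwise (Function.onFun Disjoint A) := by
      intro i j hij
      rw [Function.onFun, Set.disjoint_left]
      intro q hqi hqj
      apply hij
      have h1 : (i : ℝ) ≤ dist q p := not_lt.mp (by simpa [Metric.mem_ball] using hqi.2)
      have h2 : dist q p < (i : ℝ) + 1 := by simpa [Metric.mem_ball] using hqi.1
      have h3 : (j : ℝ) ≤ dist q p := not_lt.mp (by simpa [Metric.mem_ball] using hqj.2)
      have h4 : dist q p < (j : ℝ) + 1 := by simpa [Metric.mem_ball] using hqj.1
      have : (i : ℝ) < (j : ℝ) + 1 := lt_of_le_of_lt h1 h4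
      have : i < j + 1 := by exact_mod_cast this
      have : (j : ℝ) < (i : ℝ) + 1 := lt_of_le_of_lt h3 h2
      have : j < i + 1 := by exact_mod_cast this
      omega
    have hAu : (⋃ k, A k) = Set.univ := by
      ext q
      simp only [Set.mem_iUnion, Set.mem_univ, iff_true]
      refine ⟨⌊dist q p⌋₊, ?_, ?_⟩
      · exact Metric.mem_ball.mpr (by exact_mod_cast Nat.lt_floor_add_one (dist q p))
      · simp only [Set.mem_setOf_eq, Metric.mem_ball, not_lt]
        exact Nat.floor_le dist_nonneg
    calc ∫⁻ q, ENNReal.ofReal (K * Real.exp (-((n : ℝ) + 1) * dist q p)) ∂μ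
        = ∫⁻ q in ⋃ k, A k, ENNReal.ofReal (K * Real.exp (-((n : ℝ) + 1) * dist q p)) ∂μ := by
          rw [hAu, setLIntegral_univ]
      _ = ∑' k, ∫⁻ q in A k, ENNReal.ofReal (K * Real.exp (-((n : ℝ) + 1) * dist q p)) ∂μ :=
          lintegral_iUnion hAm hAd _
      _ ≤ ∑' k : ℕ, ENNReal.ofReal (K * c₃ * Real.exp n) * ENNReal.ofReal (Real.exp (-1)) ^ k := by
          apply ENNReal.tsum_le_tsum
          intro k
          have step1 : ∫⁻ q in A k, ENNReal.ofReal (K * Real.exp (-((n : ℝ) + 1) * dist q p)) ∂μ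
              ≤ ENNReal.ofReal (K * Real.exp (-((n : ℝ) + 1) * k)) * μ (A k) := by
            rw [← setLIntegral_const]
            apply setLIntegral_mono measurable_const
            intro q hq
            apply ENNReal.ofReal_le_ofReal
            apply mul_le_mul_of_nonneg_left _ hK0.le
            apply Real.exp_le_exp.mpr
            have hkd : (k : ℝ) ≤ dist q p := not_lt.mp (by simpa [Metric.mem_ball] using hq.2)
            nlinarith [Nat.cast_nonneg (α := ℝ) n]
          have step2 : μ (A k) ≤ ENNReal.ofReal (c₃ * ((k : ℝ) + 1) ^ n) :=
            le_trans (measure_mono Set.diff_subset) (hball k)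
          calc ∫⁻ q in A k, ENNReal.ofReal (K * Real.exp (-((n : ℝ) + 1) * dist q p)) ∂μ
              ≤ ENNReal.ofReal (K * Real.exp (-((n : ℝ) + 1) * k)) * μ (A k) := step1
            _ ≤ ENNReal.ofReal (K * Real.exp (-((n : ℝ) + 1) * k)) *
                ENNReal.ofReal (c₃ * ((k : ℝ) + 1) ^ n) := mul_le_mul_right step2 _
            _ = ENNReal.ofReal (K * Real.exp (-((n : ℝ) + 1) * k) * (c₃ * ((k : ℝ) + 1) ^ n)) := by
                rw [← ENNReal.ofReal_mul (by positivity)]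
            _ ≤ ENNReal.ofReal (K * c₃ * Real.exp n) * ENNReal.ofReal (Real.exp (-1)) ^ k := by
                rw [← ENNReal.ofReal_pow (Real.exp_pos _).le,
                  ← ENNReal.ofReal_mul (by positivity)]
                apply ENNReal.ofReal_le_ofReal
                have hp1 : ((k : ℝ) + 1) ^ n ≤ Real.exp ((k : ℝ) + 1) ^ n := by
                  apply pow_le_pow_left₀ (by positivity)
                  have h1 := Real.add_one_le_exp (k : ℝ)
                  have h2 : Real.exp (k : ℝ) ≤ Real.exp ((k : ℝ) + 1) :=
                    Real.exp_le_exp.mpr (by linarith)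
                  linarith
                have hexpeq : Real.exp (-((n : ℝ) + 1) * k) * Real.exp ((k : ℝ) + 1) ^ n
                    = Real.exp n * Real.exp (-1) ^ k := by
                  rw [← Real.exp_nat_mul, ← Real.exp_nat_mul, ← Real.exp_add, ← Real.exp_add]
                  congr 1; ring
                calc K * Real.exp (-((n : ℝ) + 1) * k) * (c₃ * ((k : ℝ) + 1) ^ n)
                    ≤ K * Real.exp (-((n : ℝ) + 1) * k) * (c₃ * Real.exp ((k : ℝ) + 1) ^ n) := by
                      apply mul_le_mul_of_nonneg_left _ (by positivity)
                      exact mul_le_mul_of_nonneg_left hp1 hc₃0.le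
                  _ = K * c₃ * Real.exp n * Real.exp (-1) ^ k := by
                      rw [show K * Real.exp (-((n : ℝ) + 1) * k) * (c₃ * Real.exp ((k : ℝ) + 1) ^ n)
                        = K * c₃ * (Real.exp (-((n : ℝ) + 1) * k) * Real.exp ((k : ℝ) + 1) ^ n) by ring,
                        hexpeq]; ring
      _ = ENNReal.ofReal (K * c₃ * Real.exp n) * ∑' k : ℕ, ENNReal.ofReal (Real.exp (-1)) ^ k :=
          ENNReal.tsum_mul_left
      _ < ⊤ := by
          apply ENNReal.mul_lt_top ENNReal.ofReal_lt_top
          rw [ENNReal.tsum_geometric]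
          apply ENNReal.inv_lt_top.mpr
          rw [tsub_pos_iff_lt]
          exact ENNReal.ofReal_lt_one.mpr (Real.exp_lt_one_iff.mpr (by norm_num))
  -- conclude
  apply hmaj.mono' (((hRmeas.pow_const 2).mul hfmeas.neg.exp).aestronglyMeasurable)
  apply Filter.Eventually.of_forall
  intro q
  show ‖R q ^ 2 * Real.exp (-f q)‖ ≤ _
  rw [Real.norm_of_nonneg (show (0:ℝ) ≤ R q ^ 2 * Real.exp (-f q) by positivity)]
  exact hbound q
end
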